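/- If 0 < α < 1/12 and α/(1 − 5α)² < β < 1, then there exists a Vitali set V that is (α,β)-winning: Alice has a winning strategy in Schmidt's (α,β)-game with target V for any initial move by Bob. -/

import Mathlib

noncomputable def rmod (g x : ℝ) : ℝ := x - g * ⌊x / g⌋

section rmod
variable {g : ℝ} (hg : 0 < g)

lemma rmod_def' (x : ℝ) : x = g * ⌊x / g⌋ + rmod g x := by unfold rmod; ring

include hg

lemma rmod_nonneg (x : ℝ) : 0 ≤ rmod g x := by
  unfold rmod
  have h := Int.floor_le (x / g)
  have h2 : g * ⌊x / g⌋ ≤ g * (x / g) := by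
    exact mul_le_mul_of_nonneg_left h hg.le
  have hx : g * (x / g) = x := by field_simp
  linarith

lemma rmod_lt (x : ℝ) : rmod g x < g := by
  unfold rmod
  have h := Int.lt_floor_add_one (x / g)
  have : x / g * g < (⌊x / g⌋ + 1) * g := by
    exact mul_lt_mul_of_pos_right h hg
  have hx : x / g * g = x := div_mul_cancel₀ x hg.ne'
  nlinarith

lemma rmod_eq_of (n : ℤ) (t : ℝ) (h0 : 0 ≤ t) (h1 : t < g) :
    rmod g ((n : ℝ) * g + t) = t := by
  unfold rmod
  have hfloor : ⌊((n : ℝ) * g + t) / g⌋ = n := by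
    rw [Int.floor_eq_iff]
    constructor
    · rw [le_div_iff₀ hg]; nlinarith
    · rw [div_lt_iff₀ hg]; nlinarith
  rw [hfloor]; ring

lemma rmod_eq_self (x : ℝ) (h0 : 0 ≤ x) (h1 : x < g) : rmod g x = x := by
  have := rmod_eq_of hg 0 x h0 h1
  simpa using this

lemma rmod_add_intmul (x : ℝ) (n : ℤ) : rmod g (x + (n : ℝ) * g) = rmod g x := by
  have hx := rmod_def' (g := g) x
  have h0 := rmod_nonneg hg x
  have h1 := rmod_lt hg x
  have : x + (n:ℝ)*g = ((⌊x/g⌋ + n : ℤ) : ℝ) * g + rmod g x := by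
    push_cast; nlinarith [hx]
  rw [this, rmod_eq_of hg _ _ h0 h1]

lemma rmod_add_of_lt (x c : ℝ) (hc : 0 ≤ c) (hlt : rmod g x + c < g) :
    rmod g (x + c) = rmod g x + c := by
  have hx := rmod_def' (g := g) x
  have h0 := rmod_nonneg hg x
  have : x + c = ((⌊x/g⌋ : ℤ) : ℝ) * g + (rmod g x + c) := by nlinarith [hx]
  rw [this, rmod_eq_of hg _ _ (by linarith) hlt]

lemma rmod_neg_of (y : ℝ) (hy : rmod g y ≠ 0) : rmod g (-y) = g - rmod g y := by
  have hx := rmod_def' (g := g) y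
  have h0 := rmod_nonneg hg y
  have h1 := rmod_lt hg y
  have : -y = ((-⌊y/g⌋ - 1 : ℤ) : ℝ) * g + (g - rmod g y) := by push_cast; nlinarith [hx]
  rw [this, rmod_eq_of hg _ _ (by linarith) (by
    have : 0 < rmod g y := lt_of_le_of_ne h0 (Ne.symm hy)
    linarith)]

lemma rmod_ne_zero_of_irrational {Δ : ℝ} (hirr : Irrational (Δ / g)) (p : ℕ) (hp : 0 < p) :
    rmod g ((p : ℝ) * Δ) ≠ 0 := by
  intro h
  have hd := rmod_def' (g := g) ((p : ℝ) * Δ)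
  rw [h, add_zero] at hd
  have hp' : (0:ℝ) < (p:ℝ) := by exact_mod_cast hp
  have heq : Δ / g = ((⌊(p : ℝ) * Δ / g⌋ : ℝ)) / (p : ℝ) := by
    rw [div_eq_div_iff hg.ne' hp'.ne']
    nlinarith [hd]
  exact hirr ⟨(⌊(p : ℝ) * Δ / g⌋ : ℚ) / (p : ℚ), by push_cast; rw [heq]⟩

end rmod

/-- Main equidistribution-type lemma: the orbit `k*Δ - c mod g` enters `[0, ρ)`
for arbitrarily large `k`. -/
lemma exists_hit {g Δ : ℝ} (hg : 0 < g) (hΔ : 0 < Δ) (hirr : Irrational (Δ / g))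
    (c ρ : ℝ) (hρ : 0 < ρ) (K : ℕ) :
    ∃ k : ℕ, K ≤ k ∧ rmod g ((k : ℝ) * Δ - c) < ρ := by
  rcases le_or_gt g ρ with hgρ | hρg
  · exact ⟨K, le_refl _, lt_of_lt_of_le (rmod_lt hg _) hgρ⟩
  -- pigeonhole: find p ≥ 1 with θ := rmod g (p*Δ) ∈ (0, ρ) ∪ (g - ρ, g)
  obtain ⟨p, hp1, hθ⟩ : ∃ p : ℕ, 0 < p ∧
      (rmod g ((p:ℝ) * Δ) < ρ ∨ g - ρ < rmod g ((p:ℝ) * Δ)) := by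
    obtain ⟨n, hn⟩ := exists_nat_gt (g / ρ)
    have hn0 : 0 < n := by
      have h1 : (0:ℝ) < g / ρ := div_pos hg hρ
      have h2 : (0:ℝ) < (n:ℝ) := lt_trans h1 hn
      exact_mod_cast h2
    have hgn : (0:ℝ) < (n:ℝ) := by exact_mod_cast hn0
    have hbucket : ∀ i : ℕ, (⌊rmod g ((i:ℝ)*Δ) / g * n⌋).toNat ∈ Finset.range n := by
      intro i
      have h0 := rmod_nonneg hg ((i:ℝ)*Δ)
      have h1 := rmod_lt hg ((i:ℝ)*Δ)
      have hlt : rmod g ((i:ℝ)*Δ) / g * n < n := by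
        have : rmod g ((i:ℝ)*Δ) / g < 1 := by rw [div_lt_one hg]; exact h1
        nlinarith
      simp only [Finset.mem_range]
      have : ⌊rmod g ((i:ℝ)*Δ) / g * n⌋ < (n : ℤ) := by
        apply Int.floor_lt.2; exact_mod_cast hlt
      omega
    obtain ⟨i, hi, j, hj, hij, heq⟩ :=
      Finset.exists_ne_map_eq_of_card_lt_of_maps_to
        (s := Finset.range (n+1)) (t := Finset.range n)
        (by simp) (fun i _ => hbucket i)
    wlog hlt : i < j generalizing i j
    · exact this j hj i hi hij.symm heq.symm (by omega)
    set ri := rmod g ((i:ℝ)*Δ) with hri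
    set rj := rmod g ((j:ℝ)*Δ) with hrj
    have h0ri : 0 ≤ ri := rmod_nonneg hg _
    have h0rj : 0 ≤ rj := rmod_nonneg hg _
    have h1ri : ri < g := rmod_lt hg _
    have h1rj : rj < g := rmod_lt hg _
    have hdiff : |rj - ri| < ρ := by
      have hfi : (⌊ri / g * n⌋ : ℝ) ≤ ri / g * n := Int.floor_le _
      have hfi2 : ri / g * n < ⌊ri / g * n⌋ + 1 := Int.lt_floor_add_one _
      have hfj : (⌊rj / g * n⌋ : ℝ) ≤ rj / g * n := Int.floor_le _
      have hfj2 : rj / g * n < ⌊rj / g * n⌋ + 1 := Int.lt_floor_add_one _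
      have heq2 : ⌊ri / g * n⌋ = ⌊rj / g * n⌋ := by
        have h0i : (0:ℤ) ≤ ⌊ri / g * n⌋ :=
          Int.floor_nonneg.2 (mul_nonneg (div_nonneg h0ri hg.le) hgn.le)
        have h0j : (0:ℤ) ≤ ⌊rj / g * n⌋ :=
          Int.floor_nonneg.2 (mul_nonneg (div_nonneg h0rj hg.le) hgn.le)
        omega
      rw [heq2] at hfi hfi2
      have habs : |rj / g * n - ri / g * n| < 1 := by
        rw [abs_lt]; constructor <;> linarith
      have key : (rj - ri) * ((n:ℝ)/g) = rj / g * n - ri / g * n := by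
        field_simp
      have hq : (0:ℝ) < (n:ℝ)/g := by positivity
      have habs2 : |rj - ri| * ((n:ℝ)/g) < 1 := by
        have e2 : |(rj - ri) * ((n:ℝ)/g)| = |rj - ri| * ((n:ℝ)/g) := by
          rw [abs_mul, abs_of_pos hq]
        rw [← e2, key]; exact habs
      have hx1 : |rj - ri| * (n:ℝ) < g := by
        have h5 := mul_lt_mul_of_pos_right habs2 hg
        have e3 : |rj - ri| * ((n:ℝ)/g) * g = |rj - ri| * (n:ℝ) := by field_simp
        rw [e3] at h5; linarith
      have hx2 : g < ρ * n := by
        rw [div_lt_iff₀ hρ] at hn; nlinarith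
      nlinarith [abs_nonneg (rj - ri)]
    refine ⟨j - i, by omega, ?_⟩
    have hdecomp_i := rmod_def' (g := g) ((i:ℝ)*Δ)
    have hdecomp_j := rmod_def' (g := g) ((j:ℝ)*Δ)
    have hsplit : ((j - i : ℕ):ℝ) * Δ = (rj - ri) + ((⌊(j:ℝ)*Δ/g⌋ - ⌊(i:ℝ)*Δ/g⌋ : ℤ):ℝ) * g := by
      push_cast [Nat.cast_sub hlt.le]
      linear_combination hdecomp_j - hdecomp_i
    rw [hsplit, rmod_add_intmul hg]
    rcases le_or_gt 0 (rj - ri) with hc | hc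
    · left
      rw [rmod_eq_self hg _ hc (by rw [abs_lt] at hdiff; linarith)]
      rw [abs_lt] at hdiff; linarith
    · right
      have e : rj - ri = ((-1 : ℤ):ℝ) * g + (g + (rj - ri)) := by push_cast; ring
      have h1 : rmod g (rj - ri) = g + (rj - ri) := by
        calc rmod g (rj - ri) = rmod g (((-1 : ℤ):ℝ) * g + (g + (rj - ri))) := by rw [← e]
          _ = g + (rj - ri) := rmod_eq_of hg _ _ (by linarith) (by linarith)
      rw [h1]; rw [abs_lt] at hdiff; linarith
  -- the walk
  set θ := rmod g ((p:ℝ)*Δ) with hθdef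
  have hθ0 : 0 ≤ θ := rmod_nonneg hg _
  have hθg : θ < g := rmod_lt hg _
  have hθne : θ ≠ 0 := rmod_ne_zero_of_irrational hg hirr p hp1
  have hθpos : 0 < θ := lt_of_le_of_ne hθ0 (Ne.symm hθne)
  have hpΔ : (p:ℝ)*Δ = g * ⌊(p:ℝ)*Δ/g⌋ + θ := rmod_def' _
  set V := rmod g ((K:ℝ)*Δ - c) with hV
  have hV0 : 0 ≤ V := rmod_nonneg hg _
  have hVg : V < g := rmod_lt hg _
  have hkey : ∀ j : ℕ, rmod g (((K + j*p : ℕ):ℝ)*Δ - c) = rmod g (V + (j:ℝ)*θ) := by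
    intro j
    have hd := rmod_def' (g := g) ((K:ℝ)*Δ - c)
    have e : ((K + j*p : ℕ):ℝ)*Δ - c
        = (V + (j:ℝ)*θ) + ((⌊((K:ℝ)*Δ - c)/g⌋ + (j:ℤ)*⌊(p:ℝ)*Δ/g⌋ : ℤ):ℝ)*g := by
      push_cast
      linear_combination hd + (j:ℝ) * hpΔ
    rw [e, rmod_add_intmul hg]
  rcases hθ with hsm | hbig
  · -- upward walk, step θ < ρ
    have hex : ∃ j : ℕ, g ≤ V + (j:ℝ)*θ := by
      obtain ⟨j, hj⟩ := exists_nat_ge ((g - V)/θ)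
      refine ⟨j, ?_⟩
      rw [div_le_iff₀ hθpos] at hj; linarith
    have hjspec := Nat.find_spec hex
    set j := Nat.find hex with hjdef
    have hjpos : j ≠ 0 := by
      intro h0
      rw [h0] at hjspec; push_cast at hjspec; linarith
    have hprev : ¬ g ≤ V + ((j-1 : ℕ):ℝ)*θ := Nat.find_min hex (by omega)
    push_neg at hprev
    have hcast : ((j-1:ℕ):ℝ) = (j:ℝ) - 1 := by
      have : 1 ≤ j := by omega
      push_cast [Nat.cast_sub this]; ring
    rw [hcast] at hprev
    have hup : V + (j:ℝ)*θ < g + θ := by nlinarith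
    refine ⟨K + j*p, by omega, ?_⟩
    rw [hkey j]
    have e : V + (j:ℝ)*θ = ((1:ℤ):ℝ)*g + (V + (j:ℝ)*θ - g) := by push_cast; ring
    rw [e, rmod_eq_of hg _ _ (by linarith) (by linarith)]
    linarith
  · -- downward walk, step t := g - θ < ρ
    set t := g - θ with ht
    have ht0 : 0 < t := by simp [ht]; linarith
    have htρ : t < ρ := by simp [ht]; linarith
    have hex : ∃ j : ℕ, V - (j:ℝ)*t < ρ := by
      obtain ⟨j, hj⟩ := exists_nat_ge (V/t)
      refine ⟨j, ?_⟩
      rw [div_le_iff₀ ht0] at hj; linarith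
    have hjspec := Nat.find_spec hex
    set j := Nat.find hex with hjdef
    have hge : 0 ≤ V - (j:ℝ)*t := by
      rcases Nat.eq_zero_or_pos j with h0 | hpos
    -- j = 0 : value V ≥ 0
      · rw [h0]; push_cast; linarith
      · have hprev : ¬ (V - ((j-1:ℕ):ℝ)*t < ρ) := Nat.find_min hex (by omega)
        push_neg at hprev
        have hcast : ((j-1:ℕ):ℝ) = (j:ℝ) - 1 := by
          have : 1 ≤ j := by omega
          push_cast [Nat.cast_sub this]; ring
        rw [hcast] at hprev
        nlinarith
    refine ⟨K + j*p, by omega, ?_⟩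
    rw [hkey j]
    have e : V + (j:ℝ)*θ = ((j:ℤ):ℝ)*g + (V - (j:ℝ)*t) := by push_cast [ht]; ring
    rw [e]
    have e2 : ((j:ℤ):ℝ)*g + (V - (j:ℝ)*t) = (V - (j:ℝ)*t) + ((j:ℤ):ℝ)*g := by ring
    rw [e2, rmod_add_intmul hg, rmod_eq_self hg _ hge (by linarith)]
    exact hjspec



namespace Schmidt

/-- A closed interval, given by its two endpoints. -/
abbrev Ivl := ℝ × ℝ

/-- The diameter (length) of an interval. -/
def diam (I : Ivl) : ℝ := I.2 - I.1

/-- The set of points of an interval. -/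
def toSet (I : Ivl) : Set ℝ := Set.Icc I.1 I.2

/-- `Sub I J` means the interval `I` is contained in the interval `J`. -/
def Sub (I J : Ivl) : Prop := toSet I ⊆ toSet J

/-- A strategy: a function producing a move from the finite sequence of
the opponent's moves so far. -/
abbrev Strategy := List Ivl → Ivl

/-- The list of Bob's moves `B 0, …, B n`. -/
def hist (B : ℕ → Ivl) (n : ℕ) : List Ivl := List.ofFn (fun i : Fin (n + 1) => B i)

/-- Bob's sequence of moves `B` is a legal play against Alice's strategy `σ`
in the `(α,β)`-game: `B 0` has positive diameter and each `B (n+1)` is a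
subinterval of Alice's previous move `σ (hist B n)` of `β` times its diameter. -/
def BobPlays (β : ℝ) (σ : Strategy) (B : ℕ → Ivl) : Prop :=
  0 < diam (B 0) ∧
  ∀ n, Sub (B (n + 1)) (σ (hist B n)) ∧ diam (B (n + 1)) = β * diam (σ (hist B n))

/-- `σ` is a legal strategy for Alice in the `(α,β)`-game: whenever Bob's
moves so far are legal, Alice's response is a subinterval of Bob's last move
of `α` times its diameter. -/
def AliceLegal (α β : ℝ) (σ : Strategy) : Prop :=
  ∀ B : ℕ → Ivl, ∀ n : ℕ, 0 < diam (B 0) →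
    (∀ m, m < n → Sub (B (m + 1)) (σ (hist B m)) ∧
      diam (B (m + 1)) = β * diam (σ (hist B m))) →
    Sub (σ (hist B n)) (B n) ∧ diam (σ (hist B n)) = α * diam (B n)

/-- `σ` is a winning strategy for Alice in Schmidt's `(α,β)`-game with target `T`:
it is legal, and in every run against it every point of the intersection of
Alice's moves lies in `T`. -/
def AliceWinsWith (α β : ℝ) (T : Set ℝ) (σ : Strategy) : Prop :=
  AliceLegal α β σ ∧
  ∀ B : ℕ → Ivl, BobPlays β σ B →
    ∀ x : ℝ, (∀ n, x ∈ toSet (σ (hist B n))) → x ∈ T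

/-- `T` is `(α,β)`-winning: Alice has a winning strategy. -/
def Winning (α β : ℝ) (T : Set ℝ) : Prop := ∃ σ, AliceWinsWith α β T σ

/-- The list of Alice's moves `A 0, …, A (n-1)`. -/
def histA (A : ℕ → Ivl) (n : ℕ) : List Ivl := List.ofFn (fun i : Fin n => A i)

/-- Alice's sequence of moves `A` is a legal play against Bob's strategy `τ`. -/
def AlicePlays (α : ℝ) (τ : Strategy) (A : ℕ → Ivl) : Prop :=
  ∀ n, Sub (A n) (τ (histA A n)) ∧ diam (A n) = α * diam (τ (histA A n))

/-- `τ` is a legal strategy for Bob in the `(α,β)`-game. -/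
def BobLegal (α β : ℝ) (τ : Strategy) : Prop :=
  0 < diam (τ []) ∧
  ∀ A : ℕ → Ivl, ∀ n : ℕ,
    (∀ m, m ≤ n → Sub (A m) (τ (histA A m)) ∧
      diam (A m) = α * diam (τ (histA A m))) →
    Sub (τ (histA A (n + 1))) (A n) ∧ diam (τ (histA A (n + 1))) = β * diam (A n)

/-- `τ` is a winning strategy for Bob in Schmidt's `(α,β)`-game with target `T`. -/
def BobWinsWith (α β : ℝ) (T : Set ℝ) (τ : Strategy) : Prop :=
  BobLegal α β τ ∧
  ∀ A : ℕ → Ivl, AlicePlays α τ A →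
    ∀ x : ℝ, (∀ n, x ∈ toSet (A n)) → x ∉ T

/-- Bob has a winning strategy in the `(α,β)`-game with target `T`. -/
def BobWinning (α β : ℝ) (T : Set ℝ) : Prop := ∃ τ, BobWinsWith α β T τ

/-- `V` is a Vitali set: it contains exactly one representative of each
coset of `ℚ` in `ℝ`. -/
def IsVitali (V : Set ℝ) : Prop :=
  ∀ x : ℝ, ∃! v : ℝ, v ∈ V ∧ ∃ q : ℚ, x - v = (q : ℝ)

/-- `P` is a partial Vitali set: it contains at most one representative of
each coset of `ℚ` in `ℝ`. -/
def IsPartialVitali (P : Set ℝ) : Prop :=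
  ∀ x ∈ P, ∀ y ∈ P, (∃ q : ℚ, x - y = (q : ℝ)) → x = y

/-- `T` is `(α,β,I)`-winning: Alice has a winning strategy in Schmidt's
`(α,β)`-game with target `T` when Bob's first move is required to be `I`. -/
def WinningFrom (α β : ℝ) (T : Set ℝ) (I : Ivl) : Prop :=
  ∃ σ : Strategy,
    (∀ B : ℕ → Ivl, B 0 = I → ∀ n : ℕ,
      (∀ m, m < n → Sub (B (m + 1)) (σ (hist B m)) ∧
        diam (B (m + 1)) = β * diam (σ (hist B m))) →
      Sub (σ (hist B n)) (B n) ∧ diam (σ (hist B n)) = α * diam (B n)) ∧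
    (∀ B : ℕ → Ivl, B 0 = I → BobPlays β σ B →
      ∀ x : ℝ, (∀ n, x ∈ toSet (σ (hist B n))) → x ∈ T)




namespace VExt

def QRel (a b : ℝ) : Prop := ∃ q : ℚ, a - b = (q : ℝ)

lemma qrel_refl (a : ℝ) : QRel a a := ⟨0, by simp⟩

lemma qrel_symm {a b : ℝ} (h : QRel a b) : QRel b a := by
  obtain ⟨q, hq⟩ := h
  exact ⟨-q, by push_cast; linarith⟩

lemma qrel_trans {a b c : ℝ} (h1 : QRel a b) (h2 : QRel b c) : QRel a c := by
  obtain ⟨q1, h1⟩ := h1; obtain ⟨q2, h2⟩ := h2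
  exact ⟨q1 + q2, by push_cast; linarith⟩

def qSetoid : Setoid ℝ := ⟨QRel, ⟨qrel_refl, qrel_symm, qrel_trans⟩⟩

open Classical in
noncomputable def rep (P : Set ℝ) (x : ℝ) : ℝ :=
  if h : ∃ p, p ∈ P ∧ QRel p x then h.choose
  else (Quotient.mk qSetoid x).out

lemma rep_rel (P : Set ℝ) (x : ℝ) : QRel (rep P x) x := by
  unfold rep
  classical
  split_ifs with h
  · exact h.choose_spec.2
  · exact Quotient.mk_out (s := qSetoid) x

lemma rep_congr {P : Set ℝ} (hP : IsPartialVitali P) {x y : ℝ} (h : QRel x y) :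
    rep P x = rep P y := by
  unfold rep
  classical
  have hiff : (∃ p, p ∈ P ∧ QRel p x) ↔ (∃ p, p ∈ P ∧ QRel p y) := by
    constructor
    · rintro ⟨p, hp, hr⟩; exact ⟨p, hp, qrel_trans hr h⟩
    · rintro ⟨p, hp, hr⟩; exact ⟨p, hp, qrel_trans hr (qrel_symm h)⟩
  split_ifs with h1 h2 h2
  · exact hP _ h1.choose_spec.1 _ h2.choose_spec.1
      (qrel_trans h1.choose_spec.2 (qrel_trans h (qrel_symm h2.choose_spec.2)))
  · exact absurd (hiff.1 h1) h2
  · exact absurd (hiff.2 h2) h1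
  · have : Quotient.mk qSetoid x = Quotient.mk qSetoid y := Quotient.sound h
    rw [this]

theorem extend_partialVitali {P : Set ℝ} (hP : IsPartialVitali P) :
    ∃ V : Set ℝ, P ⊆ V ∧ IsVitali V := by
  refine ⟨Set.range (rep P), ?_, ?_⟩
  · intro p hp
    have hcond : ∃ p', p' ∈ P ∧ QRel p' p := ⟨p, hp, qrel_refl p⟩
    refine ⟨p, ?_⟩
    unfold rep
    rw [dif_pos hcond]
    exact hP _ hcond.choose_spec.1 _ hp hcond.choose_spec.2
  · intro x
    refine ⟨rep P x, ⟨⟨x, rfl⟩, ?_⟩, ?_⟩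
    · obtain ⟨q, hq⟩ := rep_rel P x
      exact ⟨-q, by push_cast; linarith⟩
    · rintro v ⟨⟨u, rfl⟩, ⟨q, hq⟩⟩
      have h1 : QRel (rep P u) x := ⟨-q, by push_cast; linarith⟩
      have h2 : QRel u x := qrel_trans (qrel_symm (rep_rel P u)) h1
      exact rep_congr hP h2

end VExt


-- ## Part B: Alice's strategy

noncomputable def aliceK (α Δ s₀ d : ℝ) : ℤ := ⌈Real.log (s₀ / ((1 - α) * d)) / Δ⌉

noncomputable def aliceS (α Δ s₀ d : ℝ) : ℝ := s₀ * Real.exp (-(aliceK α Δ s₀ d : ℝ) * Δ)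

noncomputable def aliceMove (α Δ s₀ : ℝ) (I : Ivl) : Ivl :=
  ((⌈I.1 / aliceS α Δ s₀ (diam I)⌉ : ℝ) * aliceS α Δ s₀ (diam I),
   (⌈I.1 / aliceS α Δ s₀ (diam I)⌉ : ℝ) * aliceS α Δ s₀ (diam I) + α * diam I)

noncomputable def sigma (α Δ s₀ : ℝ) : Strategy :=
  fun l => aliceMove α Δ s₀ (l.getLastD (0, 0))

lemma diam_aliceMove (α Δ s₀ : ℝ) (I : Ivl) :
    diam (aliceMove α Δ s₀ I) = α * diam I := by
  simp only [diam, aliceMove]; ring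

lemma aliceS_pos {Δ s₀ : ℝ} (hs : 0 < s₀) (α d : ℝ) : 0 < aliceS α Δ s₀ d := by
  unfold aliceS; positivity

lemma aliceS_le {α Δ s₀ : ℝ} (hα1 : α < 1) (hs : 0 < s₀) (hΔ : 0 < Δ)
    {d : ℝ} (hd : 0 < d) : aliceS α Δ s₀ d ≤ (1 - α) * d := by
  have h1 : Real.log (s₀ / ((1 - α) * d)) / Δ ≤ (aliceK α Δ s₀ d : ℝ) := Int.le_ceil _
  have h2 : Real.log (s₀ / ((1 - α) * d)) ≤ (aliceK α Δ s₀ d : ℝ) * Δ := by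
    rw [div_le_iff₀ hΔ] at h1; linarith
  have h1α : (0:ℝ) < 1 - α := by linarith
  have hpos : 0 < s₀ / ((1 - α) * d) := by positivity
  have h3 : s₀ / ((1 - α) * d) ≤ Real.exp ((aliceK α Δ s₀ d : ℝ) * Δ) := by
    calc s₀ / ((1 - α) * d) = Real.exp (Real.log (s₀ / ((1 - α) * d))) :=
          (Real.exp_log hpos).symm
      _ ≤ _ := Real.exp_le_exp.2 h2
  have hexp : 0 < Real.exp ((aliceK α Δ s₀ d : ℝ) * Δ) := Real.exp_pos _
  unfold aliceS
  rw [show -(aliceK α Δ s₀ d : ℝ) * Δ = -((aliceK α Δ s₀ d : ℝ) * Δ) by ring, Real.exp_neg]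
  have hX : 0 < (1 - α) * d := by positivity
  rw [div_le_iff₀ hX] at h3
  have h4 := mul_le_mul_of_nonneg_right h3 (inv_nonneg.2 hexp.le)
  calc s₀ * (Real.exp ((aliceK α Δ s₀ d : ℝ) * Δ))⁻¹
      ≤ Real.exp ((aliceK α Δ s₀ d : ℝ) * Δ) * ((1 - α) * d) *
          (Real.exp ((aliceK α Δ s₀ d : ℝ) * Δ))⁻¹ := h4
    _ = (1 - α) * d := by field_simp

lemma sub_aliceMove {α Δ s₀ : ℝ} (hα0 : 0 < α) (hα1 : α < 1) (hs : 0 < s₀) (hΔ : 0 < Δ)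
    {I : Ivl} (hd : 0 < diam I) : Sub (aliceMove α Δ s₀ I) I := by
  set S := aliceS α Δ s₀ (diam I) with hS
  have hSpos : 0 < S := aliceS_pos hs _ _
  have hSle : S ≤ (1 - α) * diam I := aliceS_le hα1 hs hΔ hd
  unfold Sub toSet aliceMove
  rw [Set.Icc_subset_Icc_iff]
  · constructor
    · have := Int.le_ceil (I.1 / S)
      calc I.1 = I.1 / S * S := by field_simp
        _ ≤ (⌈I.1 / S⌉ : ℝ) * S := mul_le_mul_of_nonneg_right this hSpos.le
    · have h1 : (⌈I.1 / S⌉ : ℝ) < I.1 / S + 1 := Int.ceil_lt_add_one _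
      have h2 : (⌈I.1 / S⌉ : ℝ) * S ≤ I.1 + S := by
        have := mul_le_mul_of_nonneg_right h1.le hSpos.le
        calc (⌈I.1 / S⌉ : ℝ) * S ≤ (I.1 / S + 1) * S := this
          _ = I.1 + S := by field_simp
      have : diam I = I.2 - I.1 := rfl
      simp only [← hS]
      nlinarith [hd]
  · have h1 : (⌈I.1 / S⌉ : ℝ) * S ≤ (⌈I.1 / S⌉ : ℝ) * S + α * diam I := by nlinarith
    simp only [← hS]; exact h1

lemma hist_getLastD (B : ℕ → Ivl) (n : ℕ) (z : Ivl) :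
    (hist B n).getLastD z = B n := by
  unfold hist
  rw [List.ofFn_succ']
  simp

lemma sigma_last (α Δ s₀ : ℝ) (B : ℕ → Ivl) (n : ℕ) :
    sigma α Δ s₀ (hist B n) = aliceMove α Δ s₀ (B n) := by
  unfold sigma
  rw [hist_getLastD]

lemma diam_play {α β Δ s₀ : ℝ} (B : ℕ → Ivl) (n : ℕ)
    (hpre : ∀ m, m < n → Sub (B (m + 1)) (sigma α Δ s₀ (hist B m)) ∧
      diam (B (m + 1)) = β * diam (sigma α Δ s₀ (hist B m))) :
    ∀ m, m ≤ n → diam (B m) = (α * β) ^ m * diam (B 0) := by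
  intro m hm
  induction m with
  | zero => simp
  | succ i ih =>
    have hi := ih (by omega)
    have h := (hpre i (by omega)).2
    rw [sigma_last, diam_aliceMove] at h
    rw [h, hi]; ring

lemma sigma_legal {α β Δ s₀ : ℝ} (hα0 : 0 < α) (hα1 : α < 1) (hβ0 : 0 < β)
    (hs : 0 < s₀) (hΔ : 0 < Δ) : AliceLegal α β (sigma α Δ s₀) := by
  intro B n hd0 hpre
  have hdn : diam (B n) = (α * β) ^ n * diam (B 0) := diam_play B n hpre n (le_refl _)
  have hdnpos : 0 < diam (B n) := by
    rw [hdn]; positivity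
  rw [sigma_last]
  exact ⟨sub_aliceMove hα0 hα1 hs hΔ hdnpos, diam_aliceMove α Δ s₀ (B n)⟩

-- ## the target set W

noncomputable def WSet (α β Δ s₀ : ℝ) : Set ℝ :=
  {x | ∃ d₀ : ℝ, 0 < d₀ ∧ ∀ n : ℕ, ∃ m : ℤ,
    (m : ℝ) * aliceS α Δ s₀ ((α * β) ^ n * d₀) ≤ x ∧
    x ≤ (m : ℝ) * aliceS α Δ s₀ ((α * β) ^ n * d₀) + α * ((α * β) ^ n * d₀)}

lemma outcome_mem_WSet {α β Δ s₀ : ℝ} (B : ℕ → Ivl)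
    (hB : BobPlays β (sigma α Δ s₀) B) (x : ℝ)
    (hx : ∀ n, x ∈ toSet (sigma α Δ s₀ (hist B n))) : x ∈ WSet α β Δ s₀ := by
  refine ⟨diam (B 0), hB.1, fun n => ?_⟩
  have hdn : diam (B n) = (α * β) ^ n * diam (B 0) :=
    diam_play B n (fun m hm => hB.2 m) n (le_refl _)
  have h := hx n
  rw [sigma_last] at h
  unfold aliceMove toSet at h
  rw [hdn] at h
  exact ⟨⌈(B n).1 / aliceS α Δ s₀ ((α * β) ^ n * diam (B 0))⌉, h.1, h.2⟩

-- ## Part C: the arithmetic kill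

lemma rmod_add_rmod {g : ℝ} (hg : 0 < g) (X Y : ℝ) :
    rmod g (X + Y) = rmod g (rmod g X + rmod g Y) := by
  have hX := rmod_def' (g := g) X
  have hY := rmod_def' (g := g) Y
  have e : X + Y = (rmod g X + rmod g Y) + ((⌊X/g⌋ + ⌊Y/g⌋ : ℤ):ℝ) * g := by
    push_cast; linarith [hX, hY]
  rw [e, rmod_add_intmul hg]

lemma mark_window {α β Δ s₀ : ℝ} (hα0 : 0 < α) (hα1 : α < 1) (hβ0 : 0 < β)
    (hs : 0 < s₀) (hΔ : 0 < Δ) (hab1 : α * β < 1)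
    {x d₀ : ℝ} (hd₀ : 0 < d₀)
    (hcond : ∀ n : ℕ, ∃ m : ℤ,
      (m : ℝ) * aliceS α Δ s₀ ((α * β) ^ n * d₀) ≤ x ∧
      x ≤ (m : ℝ) * aliceS α Δ s₀ ((α * β) ^ n * d₀) + α * ((α * β) ^ n * d₀))
    (k : ℕ)
    (hkA : Real.log (s₀ / ((1 - α) * d₀)) ≤ (k : ℝ) * Δ)
    (hζ : rmod (Real.log (1/(α*β))) ((k:ℝ)*Δ - Real.log (s₀ / ((1 - α) * d₀))) < Δ) :
    ∃ m : ℤ,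
      (m : ℝ) * (s₀ * Real.exp (-((k:ℝ)*Δ))) ≤ x ∧
      x ≤ (m : ℝ) * (s₀ * Real.exp (-((k:ℝ)*Δ))) +
        (α/(1-α)) * Real.exp (rmod (Real.log (1/(α*β)))
            ((k:ℝ)*Δ - Real.log (s₀ / ((1 - α) * d₀)))) *
        (s₀ * Real.exp (-((k:ℝ)*Δ))) := by
  have h1α : (0:ℝ) < 1 - α := by linarith
  have hab0 : 0 < α * β := by positivity
  set g := Real.log (1/(α*β)) with hgdef
  set A := Real.log (s₀ / ((1 - α) * d₀)) with hAdef
  have hg : 0 < g := Real.log_pos (by rw [lt_div_iff₀ hab0]; linarith)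
  set ζ := rmod g ((k:ℝ)*Δ - A) with hζdef
  have hζ0 : 0 ≤ ζ := rmod_nonneg hg _
  set F := ⌊((k:ℝ)*Δ - A)/g⌋ with hFdef
  have hdec : (k:ℝ)*Δ - A = g * F + ζ := rmod_def' _
  have hF0 : 0 ≤ F := Int.floor_nonneg.2 (div_nonneg (by linarith) hg.le)
  set N := F.toNat with hNdef
  have hN : (N:ℝ) = (F:ℝ) := by
    rw [hNdef]; exact_mod_cast Int.toNat_of_nonneg hF0
  have hdecN : (k:ℝ)*Δ - A = g * N + ζ := by rw [hN]; exact hdec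
  -- log identity
  have hpos1 : 0 < s₀ / ((1 - α) * d₀) := by positivity
  have hpos2 : (0:ℝ) < (1/(α*β))^N := by positivity
  have hlog : Real.log (s₀ / ((1 - α) * ((α*β)^N * d₀))) = A + N*g := by
    have e1 : s₀ / ((1 - α) * ((α*β)^N * d₀)) = (s₀ / ((1 - α) * d₀)) * (1/(α*β))^N := by
      rw [one_div, inv_pow, ← div_eq_mul_inv, div_div]
      congr 1
      ring
    rw [e1, Real.log_mul hpos1.ne' hpos2.ne', Real.log_pow]
  -- the index matches
  have hK : aliceK α Δ s₀ ((α*β)^N * d₀) = (k:ℤ) := by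
    unfold aliceK
    rw [hlog]
    have hz : A + N*g = (k:ℝ)*Δ - ζ := by linarith [hdecN]
    rw [hz, Int.ceil_eq_iff]
    constructor
    · rw [lt_div_iff₀ hΔ]; push_cast; nlinarith
    · rw [div_le_iff₀ hΔ]; push_cast; nlinarith
  have hS : aliceS α Δ s₀ ((α*β)^N * d₀) = s₀ * Real.exp (-((k:ℝ)*Δ)) := by
    unfold aliceS
    rw [hK]; push_cast; ring_nf
  -- width identity
  have hA : Real.exp A = s₀/((1-α)*d₀) := Real.exp_log hpos1
  have hGN : Real.exp ((N:ℝ)*g) = (1/(α*β))^N := by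
    rw [Real.exp_nat_mul, Real.exp_log (by positivity)]
  have hwidth : α * ((α*β)^N * d₀) =
      (α/(1-α)) * Real.exp ζ * (s₀ * Real.exp (-((k:ℝ)*Δ))) := by
    have e2 : Real.exp ζ * Real.exp (-((k:ℝ)*Δ)) = (Real.exp A)⁻¹ * (Real.exp ((N:ℝ)*g))⁻¹ := by
      rw [← Real.exp_add, ← Real.exp_neg, ← Real.exp_neg, ← Real.exp_add]
      congr 1
      linarith [hdecN]
    have e3 : ((1/(α*β))^N : ℝ)⁻¹ = (α*β)^N := by
      rw [← inv_pow]; simp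
    calc α * ((α*β)^N * d₀)
        = (α/(1-α)) * ((s₀/((1-α)*d₀))⁻¹ * s₀) * (α*β)^N := by field_simp
      _ = (α/(1-α)) * Real.exp ζ * (s₀ * Real.exp (-((k:ℝ)*Δ))) := by
          rw [← e3, ← hA, ← hGN]
          linear_combination (-((α/(1-α)) * s₀)) * e2
  obtain ⟨m, h1, h2⟩ := hcond N
  rw [hS] at h1 h2
  rw [hwidth] at h2
  exact ⟨m, h1, h2⟩


lemma fract_window {a b t : ℝ} (M : ℤ) (ha0 : 0 ≤ a) (hb0 : 0 ≤ b) (ha1 : a < 1) (hb1 : b < 1)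
    (h1 : -b ≤ t) (h2 : t ≤ a) :
    Int.fract ((M:ℝ) + t) ≤ a ∨ 1 - b ≤ Int.fract ((M:ℝ) + t) := by
  rw [Int.fract_intCast_add]
  rcases le_or_gt 0 t with h | h
  · left; rw [Int.fract_eq_self.2 ⟨h, lt_of_le_of_lt h2 ha1⟩]; exact h2
  · right
    have he : Int.fract t = t + 1 := by
      have h3 : Int.fract (t + (1:ℤ)) = Int.fract t := Int.fract_add_intCast t 1
      have h4 : Int.fract (t + (1:ℤ)) = t + 1 := by
        push_cast
        exact Int.fract_eq_self.2 ⟨by linarith, by linarith⟩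
      rw [← h3, h4]
    rw [he]; linarith

set_option maxHeartbeats 2000000 in
lemma wset_partialVitali {α β Δ s₀ : ℝ} (hα0 : 0 < α) (hα12 : α < 1/12)
    (hβ0 : 0 < β) (hβ1 : β < 1) (hs : 0 < s₀)
    (hΔlo : Real.log (1/(α*β))/2 + Real.log (1+α)/2 < Δ)
    (hΔhi : Δ < Real.log (1/(α*β))/2 + Real.log (1+α))
    (hRsum : (α/(1-α))*Real.exp Δ + (α/(1-α))*Real.exp (Real.log (1+α)/2) < 1 - 2*α)
    (hU : ∀ (q c1 r1 : ℚ) (K : ℕ) (Ma Mb : ℝ),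
      ((Ma = (α/(1-α))*Real.exp Δ ∧ Mb = (α/(1-α))*Real.exp (Real.log (1+α)/2)) ∨
       (Ma = (α/(1-α))*Real.exp (Real.log (1+α)/2) ∧ Mb = (α/(1-α))*Real.exp Δ)) →
      (q:ℝ) ≠ 0 → 0 < (r1:ℝ) →
      ∃ k : ℕ, K ≤ k ∧ rmod (Real.log (1/(α*β))) ((k:ℝ)*Δ - (c1:ℝ)) < (r1:ℝ) ∧
        Ma + α/2 < Int.fract ((q:ℝ) * Real.exp ((k:ℝ)*Δ) / s₀) ∧
        Int.fract ((q:ℝ) * Real.exp ((k:ℝ)*Δ) / s₀) < 1 - Mb - α/2) :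
    IsPartialVitali (WSet α β Δ s₀) := by
  intro x hx y hy hqex
  obtain ⟨q, hq⟩ := hqex
  rcases eq_or_ne (q:ℝ) 0 with hq0 | hqne
  · rw [hq0] at hq; linarith [hq, sub_eq_zero.1 hq]
  exfalso
  have h1α : (0:ℝ) < 1 - α := by linarith
  have hab0 : 0 < α * β := by positivity
  have hab1 : α * β < 1 := by nlinarith
  obtain ⟨d₀, hd₀, hcx⟩ := hx
  obtain ⟨e₀, he₀, hcy⟩ := hy
  set g := Real.log (1/(α*β)) with hgdef
  set τ := Real.log (1+α) with hτdef
  have hg : 0 < g := Real.log_pos (by rw [lt_div_iff₀ hab0]; linarith)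
  have hτ : 0 < τ := Real.log_pos (by linarith)
  have hτg : 2*τ < g := by
    have h12 : α * β < 1/12 := by nlinarith
    have hsq : ((1+α)*(1+α)) < 1/(α*β) := by
      rw [lt_div_iff₀ hab0]
      nlinarith
    have := Real.log_lt_log (by positivity) hsq
    rw [Real.log_mul (by positivity) (by positivity)] at this
    rw [hgdef, hτdef]; linarith
  have hΔg : Δ < g := by linarith
  have hτΔ : τ < Δ := by linarith
  set Rb := (α/(1-α))*Real.exp Δ with hRbdef
  set Rs := (α/(1-α))*Real.exp (τ/2) with hRsdef
  have hRb0 : 0 ≤ Rb := by positivity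
  have hRs0 : 0 ≤ Rs := by positivity
  have hRb1 : Rb < 1 := by rw [hRbdef]; nlinarith [hRsum, hRs0, hα0]
  have hRs1 : Rs < 1 := by rw [hRsdef]; nlinarith [hRsum, hRb0, hα0]
  set A₁ := Real.log (s₀ / ((1 - α) * d₀)) with hA₁def
  set A₂ := Real.log (s₀ / ((1 - α) * e₀)) with hA₂def
  set φ := rmod g (A₂ - A₁) with hφdef
  have hφ0 : 0 ≤ φ := rmod_nonneg hg _
  have hφg : φ < g := rmod_lt hg _
  have hΔ0 : 0 < Δ := by linarith
  have hexpζbound : ∀ ζ c : ℝ, ζ ≤ c → (α/(1-α)) * Real.exp ζ ≤ (α/(1-α)) * Real.exp c := by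
    intro ζ c h
    exact mul_le_mul_of_nonneg_left (Real.exp_le_exp.2 h) (by positivity)
  by_cases hcase : φ < Δ - τ/2
  · -- case Y : the y-play is the small-depth anchor
    obtain ⟨c1, hc1a, hc1b⟩ := exists_rat_btwn (show A₂ + τ/16 < A₂ + τ/8 by linarith only [hτ])
    obtain ⟨r1, hr1a, hr1b⟩ := exists_rat_btwn (show (τ/16:ℝ) < τ/8 by linarith only [hτ])
    set K := ⌈(max A₁ A₂)/Δ⌉₊ with hKdef
    obtain ⟨k, hkK, hksel, hfr1, hfr2⟩ := hU q c1 r1 K Rb Rs (Or.inl ⟨hRbdef, hRsdef⟩) hqne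
      (by linarith only [hr1a, hτ])
    have hkA : max A₁ A₂ ≤ (k:ℝ)*Δ := by
      have h1 : (max A₁ A₂)/Δ ≤ (K:ℝ) := Nat.le_ceil _
      have h2 : (K:ℝ) ≤ (k:ℝ) := by exact_mod_cast hkK
      rw [div_le_iff₀ hΔ0] at h1
      have h3 : (K:ℝ)*Δ ≤ (k:ℝ)*Δ := mul_le_mul_of_nonneg_right h2 hΔ0.le
      linarith only [h1, h3]
    have hkA₁ : A₁ ≤ (k:ℝ)*Δ := le_trans (le_max_left _ _) hkA
    have hkA₂ : A₂ ≤ (k:ℝ)*Δ := le_trans (le_max_right _ _) hkA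
    have hsel0 : 0 ≤ rmod g ((k:ℝ)*Δ - (c1:ℝ)) := rmod_nonneg hg _
    set ζ₂ := rmod g ((k:ℝ)*Δ - A₂) with hζ₂def
    have hζ₂eq : ζ₂ = rmod g ((k:ℝ)*Δ - (c1:ℝ)) + ((c1:ℝ) - A₂) := by
      rw [hζ₂def, show (k:ℝ)*Δ - A₂ = ((k:ℝ)*Δ - (c1:ℝ)) + ((c1:ℝ) - A₂) by ring]
      exact rmod_add_of_lt hg _ _ (by linarith only [hc1a, hτ])
        (by linarith only [hksel, hr1b, hc1b, hτg, hτ])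
    have hζ₂ub : ζ₂ < τ/4 := by
      rw [hζ₂eq]; linarith only [hksel, hr1b, hc1b]
    have hζ₂0 : 0 ≤ ζ₂ := rmod_nonneg hg _
    set ζ₁ := rmod g ((k:ℝ)*Δ - A₁) with hζ₁def
    have hζ₁eq : ζ₁ = ζ₂ + φ := by
      rw [hζ₁def, show (k:ℝ)*Δ - A₁ = ((k:ℝ)*Δ - A₂) + (A₂ - A₁) by ring,
          rmod_add_rmod hg, ← hζ₂def, ← hφdef]
      exact rmod_eq_self hg _ (by linarith only [hζ₂0, hφ0])
        (by linarith only [hζ₂ub, hcase, hΔg, hτ])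
    have hζ₁Δ : ζ₁ < Δ := by rw [hζ₁eq]; linarith only [hζ₂ub, hcase, hτ]
    obtain ⟨m₁, hm₁a, hm₁b⟩ := mark_window hα0 (by linarith only [hα12]) hβ0 hs hΔ0 hab1 hd₀ hcx
      k hkA₁ hζ₁Δ
    obtain ⟨m₂, hm₂a, hm₂b⟩ := mark_window hα0 (by linarith only [hα12]) hβ0 hs hΔ0 hab1 he₀ hcy
      k hkA₂ (lt_trans hζ₂ub (by linarith only [hτΔ, hτ]))
    rw [← hζ₁def] at hm₁b
    rw [← hζ₂def] at hm₂b
    set S := s₀ * Real.exp (-((k:ℝ)*Δ)) with hSdef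
    have hS0 : 0 < S := by positivity
    have hw₁ : (α/(1-α)) * Real.exp ζ₁ * S ≤ Rb * S :=
      mul_le_mul_of_nonneg_right (hexpζbound _ _ hζ₁Δ.le) hS0.le
    have hw₂ : (α/(1-α)) * Real.exp ζ₂ * S ≤ Rs * S :=
      mul_le_mul_of_nonneg_right (hexpζbound _ _ (by linarith only [hζ₂ub, hτ])) hS0.le
    set t := ((x - m₁*S) - (y - m₂*S))/S with htdef
    have hqS : (q:ℝ)/S = ((m₁ - m₂ : ℤ):ℝ) + t := by
      have he : (x - m₁*S) - (y - m₂*S) = (q:ℝ) - ((m₁ - m₂:ℤ):ℝ)*S := by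
        push_cast
        linarith only [hq]
      rw [htdef, he]
      field_simp
      ring
    have ht1 : t ≤ Rb := by
      rw [htdef, div_le_iff₀ hS0]
      linarith only [hm₁b, hm₂a, hw₁]
    have ht2 : -Rs ≤ t := by
      rw [htdef, le_div_iff₀ hS0]
      linarith only [hm₁a, hm₂b, hw₂]
    have hdisj := fract_window (m₁ - m₂) hRb0 hRs0 hRb1 hRs1 ht2 ht1
    rw [← hqS] at hdisj
    have hqS2 : (q:ℝ)/S = (q:ℝ)*Real.exp ((k:ℝ)*Δ)/s₀ := by
      rw [hSdef, Real.exp_neg]; field_simp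
    rw [hqS2] at hdisj
    rcases hdisj with h | h
    · linarith only [h, hfr1, hα0]
    · linarith only [h, hfr2, hα0]
  · -- case X : the x-play is the small-depth anchor
    push_neg at hcase
    have hφpos : 0 < φ := by linarith only [hcase, hτΔ, hτ]
    obtain ⟨c1, hc1a, hc1b⟩ := exists_rat_btwn (show A₁ + τ/16 < A₁ + τ/8 by linarith only [hτ])
    obtain ⟨r1, hr1a, hr1b⟩ := exists_rat_btwn (show (τ/16:ℝ) < τ/8 by linarith only [hτ])
    set K := ⌈(max A₁ A₂)/Δ⌉₊ with hKdef
    obtain ⟨k, hkK, hksel, hfr1, hfr2⟩ := hU q c1 r1 K Rs Rb (Or.inr ⟨hRsdef, hRbdef⟩) hqne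
      (by linarith only [hr1a, hτ])
    have hkA : max A₁ A₂ ≤ (k:ℝ)*Δ := by
      have h1 : (max A₁ A₂)/Δ ≤ (K:ℝ) := Nat.le_ceil _
      have h2 : (K:ℝ) ≤ (k:ℝ) := by exact_mod_cast hkK
      rw [div_le_iff₀ hΔ0] at h1
      have h3 : (K:ℝ)*Δ ≤ (k:ℝ)*Δ := mul_le_mul_of_nonneg_right h2 hΔ0.le
      linarith only [h1, h3]
    have hkA₁ : A₁ ≤ (k:ℝ)*Δ := le_trans (le_max_left _ _) hkA
    have hkA₂ : A₂ ≤ (k:ℝ)*Δ := le_trans (le_max_right _ _) hkA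
    have hsel0 : 0 ≤ rmod g ((k:ℝ)*Δ - (c1:ℝ)) := rmod_nonneg hg _
    set ζ₁ := rmod g ((k:ℝ)*Δ - A₁) with hζ₁def
    have hζ₁eq : ζ₁ = rmod g ((k:ℝ)*Δ - (c1:ℝ)) + ((c1:ℝ) - A₁) := by
      rw [hζ₁def, show (k:ℝ)*Δ - A₁ = ((k:ℝ)*Δ - (c1:ℝ)) + ((c1:ℝ) - A₁) by ring]
      exact rmod_add_of_lt hg _ _ (by linarith only [hc1a, hτ])
        (by linarith only [hksel, hr1b, hc1b, hτg, hτ])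
    have hζ₁ub : ζ₁ < τ/4 := by
      rw [hζ₁eq]; linarith only [hksel, hr1b, hc1b]
    have hζ₁0 : 0 ≤ ζ₁ := rmod_nonneg hg _
    have hφneg : rmod g (A₁ - A₂) = g - φ := by
      rw [show A₁ - A₂ = -(A₂ - A₁) by ring]
      rw [rmod_neg_of hg _ (by rw [← hφdef]; exact ne_of_gt hφpos), ← hφdef]
    set ζ₂ := rmod g ((k:ℝ)*Δ - A₂) with hζ₂def
    have hζ₂eq : ζ₂ = ζ₁ + (g - φ) := by
      rw [hζ₂def, show (k:ℝ)*Δ - A₂ = ((k:ℝ)*Δ - A₁) + (A₁ - A₂) by ring,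
          rmod_add_rmod hg, hφneg, ← hζ₁def]
      exact rmod_eq_self hg _ (by linarith only [hζ₁0, hφg])
        (by linarith only [hζ₁ub, hcase, hτΔ, hτ])
    have hζ₂Δ : ζ₂ < Δ := by
      rw [hζ₂eq]; linarith only [hζ₁ub, hcase, hΔlo, hΔhi, hτ, hτg]
    obtain ⟨m₁, hm₁a, hm₁b⟩ := mark_window hα0 (by linarith only [hα12]) hβ0 hs hΔ0 hab1 hd₀ hcx
      k hkA₁ (lt_trans hζ₁ub (by linarith only [hτΔ, hτ]))
    obtain ⟨m₂, hm₂a, hm₂b⟩ := mark_window hα0 (by linarith only [hα12]) hβ0 hs hΔ0 hab1 he₀ hcy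
      k hkA₂ hζ₂Δ
    rw [← hζ₁def] at hm₁b
    rw [← hζ₂def] at hm₂b
    set S := s₀ * Real.exp (-((k:ℝ)*Δ)) with hSdef
    have hS0 : 0 < S := by positivity
    have hw₁ : (α/(1-α)) * Real.exp ζ₁ * S ≤ Rs * S :=
      mul_le_mul_of_nonneg_right (hexpζbound _ _ (by linarith only [hζ₁ub, hτ])) hS0.le
    have hw₂ : (α/(1-α)) * Real.exp ζ₂ * S ≤ Rb * S :=
      mul_le_mul_of_nonneg_right (hexpζbound _ _ hζ₂Δ.le) hS0.le
    set t := ((x - m₁*S) - (y - m₂*S))/S with htdef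
    have hqS : (q:ℝ)/S = ((m₁ - m₂ : ℤ):ℝ) + t := by
      have he : (x - m₁*S) - (y - m₂*S) = (q:ℝ) - ((m₁ - m₂:ℤ):ℝ)*S := by
        push_cast
        linarith only [hq]
      rw [htdef, he]
      field_simp
      ring
    have ht1 : t ≤ Rs := by
      rw [htdef, div_le_iff₀ hS0]
      linarith only [hm₁b, hm₂a, hw₁]
    have ht2 : -Rb ≤ t := by
      rw [htdef, le_div_iff₀ hS0]
      linarith only [hm₁a, hm₂b, hw₂]
    have hdisj := fract_window (m₁ - m₂) hRs0 hRb0 hRs1 hRb1 ht2 ht1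
    rw [← hqS] at hdisj
    have hqS2 : (q:ℝ)/S = (q:ℝ)*Real.exp ((k:ℝ)*Δ)/s₀ := by
      rw [hSdef, Real.exp_neg]; field_simp
    rw [hqS2] at hdisj
    rcases hdisj with h | h
    · linarith only [h, hfr1, hα0]
    · linarith only [h, hfr2, hα0]



lemma fract_mem_Ioo_iff {lo hi : ℝ} (hlo : 0 ≤ lo) (hhi : hi ≤ 1) (tx : ℝ) :
    (tx ∈ ⋃ m : ℤ, Set.Ioo ((m:ℝ) + lo) ((m:ℝ) + hi)) ↔
      (lo < Int.fract tx ∧ Int.fract tx < hi) := by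
  constructor
  · rintro ⟨s, ⟨m, rfl⟩, hm⟩
    simp only [Set.mem_Ioo] at hm
    have hfl : ⌊tx⌋ = m := by
      rw [Int.floor_eq_iff]
      constructor
      · linarith [hm.1]
      · linarith [hm.2]
    rw [Int.fract]
    rw [hfl]
    constructor <;> [linarith [hm.1]; linarith [hm.2]]
  · rintro ⟨h1, h2⟩
    refine Set.mem_iUnion.2 ⟨⌊tx⌋, ?_⟩
    simp only [Set.mem_Ioo]
    have hfr : Int.fract tx = tx - ⌊tx⌋ := rfl
    constructor
    · linarith [hfr, h1]
    · linarith [hfr, h2]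

set_option maxHeartbeats 1000000 in
lemma exists_good_params {α β : ℝ} (hα0 : 0 < α) (hα12 : α < 1/12)
    (hβlow : α / (1 - 5*α)^2 < β) (hβ1 : β < 1) :
    ∃ Δ s₀ : ℝ, 0 < Δ ∧ 0 < s₀ ∧ IsPartialVitali (WSet α β Δ s₀) := by
  have h5α : (0:ℝ) < 1 - 5*α := by linarith
  have hβ0 : 0 < β := lt_of_le_of_lt (by positivity) hβlow
  have h1α : (0:ℝ) < 1 - α := by linarith
  have hab0 : 0 < α * β := by positivity
  have hab1 : α * β < 1 := by nlinarith
  set g := Real.log (1/(α*β)) with hgdef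
  set τ := Real.log (1+α) with hτdef
  have hg : 0 < g := Real.log_pos (by rw [lt_div_iff₀ hab0]; linarith)
  have hτ : 0 < τ := Real.log_pos (by linarith)
  have hτg : 2*τ < g := by
    have h12 : α * β < 1/12 := by nlinarith
    have hsq : ((1+α)*(1+α)) < 1/(α*β) := by
      rw [lt_div_iff₀ hab0]
      nlinarith
    have hl := Real.log_lt_log (by positivity) hsq
    rw [Real.log_mul (by positivity) (by positivity)] at hl
    rw [hgdef, hτdef]; linarith
  -- choose Δ
  obtain ⟨ξ, hξirr, hξ1, hξ2⟩ := exists_irrational_btwn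
    (show (g/2 + τ/2)/g < (g/2 + τ)/g from
      (div_lt_div_iff_of_pos_right hg).2 (by linarith only [hτ]))
  set Δ := ξ * g with hΔdef
  have hirr : Irrational (Δ / g) := by
    rw [hΔdef, mul_div_cancel_right₀ _ hg.ne']
    exact hξirr
  have hΔlo : g/2 + τ/2 < Δ := by
    have h := (div_lt_iff₀ hg).1 hξ1
    rw [hΔdef]; linarith only [h]
  have hΔhi : Δ < g/2 + τ := by
    have h := (lt_div_iff₀ hg).1 hξ2
    rw [hΔdef]; linarith only [h]
  have hΔ0 : 0 < Δ := by linarith only [hΔlo, hg, hτ]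
  set Rb := (α/(1-α))*Real.exp Δ with hRbdef
  set Rs := (α/(1-α))*Real.exp (τ/2) with hRsdef
  have hEg : Real.exp g = 1/(α*β) := by rw [hgdef]; exact Real.exp_log (by positivity)
  have hEτ : Real.exp τ = 1+α := by rw [hτdef]; exact Real.exp_log (by linarith)
  have hEg2 : Real.exp (g/2) * Real.exp (g/2) = 1/(α*β) := by
    rw [← Real.exp_add, show g/2 + g/2 = g by ring]; exact hEg
  have hkey : Real.exp (g/2) < (1-5*α)/α := by
    have ha : 0 < Real.exp (g/2) := Real.exp_pos _
    have hb : 0 < (1-5*α)/α := by positivity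
    have hcross : α * α < (α*β) * ((1-5*α) * (1-5*α)) := by
      have h' := (div_lt_iff₀ (show (0:ℝ) < (1-5*α)^2 by positivity)).1 hβlow
      nlinarith [h', hα0]
    have hsq : Real.exp (g/2) * Real.exp (g/2) < ((1-5*α)/α) * ((1-5*α)/α) := by
      rw [hEg2, div_mul_div_comm, div_lt_div_iff₀ (by positivity) (by positivity)]
      nlinarith [hcross]
    nlinarith [ha, hb, hsq]
  have hexpΔ : Real.exp Δ < Real.exp (g/2) * (1+α) := by
    calc Real.exp Δ < Real.exp (g/2 + τ) := Real.exp_lt_exp.2 hΔhi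
      _ = Real.exp (g/2) * (1+α) := by rw [Real.exp_add, hEτ]
  have hexpτ2 : Real.exp (τ/2) ≤ 1+α := by
    calc Real.exp (τ/2) ≤ Real.exp τ := Real.exp_le_exp.2 (by linarith only [hτ])
      _ = 1+α := hEτ
  have hRsum : Rb + Rs < 1 - 2*α := by
    have hpos : 0 < α/(1-α) := by positivity
    have h1 : Rb < (α/(1-α)) * (((1-5*α)/α) * (1+α)) := by
      rw [hRbdef]
      refine mul_lt_mul_of_pos_left ?_ hpos
      calc Real.exp Δ < Real.exp (g/2)*(1+α) := hexpΔ
        _ < ((1-5*α)/α)*(1+α) := by nlinarith [hkey, hα0]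
    have h2 : Rs ≤ (α/(1-α)) * (1+α) := by
      rw [hRsdef]
      exact mul_le_mul_of_nonneg_left hexpτ2 hpos.le
    have h3 : (α/(1-α)) * (((1-5*α)/α) * (1+α)) + (α/(1-α)) * (1+α) ≤ 1 - 2*α := by
      have e : (α/(1-α)) * (((1-5*α)/α) * (1+α)) + (α/(1-α)) * (1+α)
          = (1+α)*(1-4*α)/(1-α) := by
        field_simp
        ring
      rw [e, div_le_iff₀ h1α]
      nlinarith [hα0]
    linarith only [h1, h2, h3]
  have hRb0 : 0 ≤ Rb := by positivity
  have hRs0 : 0 ≤ Rs := by positivity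
  classical
  -- the Baire category argument
  set lov : Bool → ℝ := fun bit => (if bit then Rs else Rb) + α/2 with hlovdef
  set hiv : Bool → ℝ := fun bit => 1 - (if bit then Rb else Rs) - α/2 with hhivdef
  have hlo0 : ∀ b, 0 < lov b := by
    intro b; cases b <;> simp only [hlovdef] <;> norm_num <;> linarith [hRb0, hRs0, hα0]
  have hhi1 : ∀ b, hiv b ≤ 1 := by
    intro b; cases b <;> simp only [hhivdef] <;> norm_num <;> linarith [hRb0, hRs0, hα0]
  have hlohi : ∀ b, lov b < hiv b := by
    intro b; cases b <;> simp only [hlovdef, hhivdef] <;> norm_num <;>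
      linarith [hRsum, hα0]
  clear_value lov hiv
  set U : ℚ × ℚ × ℚ × ℕ × Bool → Set ℝ := fun i =>
    if (i.1:ℝ) = 0 ∨ (i.2.2.1:ℝ) ≤ 0 then Set.univ
    else Set.Iio 1 ∪ Set.Ioi 2 ∪ ⋃ k : ℕ,
      if i.2.2.2.1 ≤ k ∧ rmod g ((k:ℝ)*Δ - (i.2.1:ℝ)) < (i.2.2.1:ℝ) then
        Set.Ioo (1:ℝ) 2 ∩ (fun s => (i.1:ℝ) * Real.exp ((k:ℝ)*Δ) / s) ⁻¹'
          (⋃ m : ℤ, Set.Ioo ((m:ℝ) + lov i.2.2.2.2) ((m:ℝ) + hiv i.2.2.2.2))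
      else ∅
    with hUdef
  have hopen : ∀ i, IsOpen (U i) := by
    intro i
    simp only [hUdef]
    split_ifs with hguard
    · exact isOpen_univ
    refine (isOpen_Iio.union isOpen_Ioi).union (isOpen_iUnion fun k => ?_)
    split_ifs with hk
    · refine ContinuousOn.isOpen_inter_preimage ?_ isOpen_Ioo (isOpen_iUnion fun m => isOpen_Ioo)
      exact ContinuousOn.div continuousOn_const continuousOn_id
        (fun z hz => by
          have : (1:ℝ) < z := hz.1
          linarith)
    · exact isOpen_empty
  have hdense : ∀ i, Dense (U i) := by
    rintro ⟨q, c1, r1, K, bit⟩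
    simp only [hUdef]
    split_ifs with hguard
    · exact dense_univ
    push_neg at hguard
    obtain ⟨hq0, hr0⟩ := hguard
    rw [dense_iff_inter_open]
    rintro O hO ⟨x₀, hx₀⟩
    obtain ⟨ε, hε, hball⟩ := Metric.isOpen_iff.1 hO x₀ hx₀
    rw [Real.ball_eq_Ioo] at hball
    rcases lt_or_ge x₀ 1 with hx1 | hx1
    · exact ⟨x₀, hx₀, Or.inl (Or.inl hx1)⟩
    rcases lt_or_ge 2 x₀ with hx2 | hx2
    · exact ⟨x₀, hx₀, Or.inl (Or.inr hx2)⟩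
    set a := max (x₀ - ε/2) 1 with hadef
    set b := min (x₀ + ε/2) 2 with hbdef
    have ha1 : 1 ≤ a := le_max_right _ _
    have hb2 : b ≤ 2 := min_le_right _ _
    have ha' : x₀ - ε/2 ≤ a := le_max_left _ _
    have hb' : b ≤ x₀ + ε/2 := min_le_left _ _
    have hab : a < b := by
      rcases lt_or_ge x₀ 2 with h | h
      · have h1 : a ≤ x₀ := max_le (by linarith) hx1
        have h2 : x₀ < b := lt_min (by linarith) h
        linarith
      · have hx₀2 : x₀ = 2 := le_antisymm hx2 h
        have h1 : a < 2 := max_lt (by rw [hx₀2]; linarith) one_lt_two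
        have h2 : (2:ℝ) ≤ b := le_min (by rw [hx₀2]; linarith) (le_refl 2)
        linarith
    set c₁ := a + (b-a)/4 with hc₁def
    set c₂ := b - (b-a)/4 with hc₂def
    have hc₁c₂ : c₁ < c₂ := by rw [hc₁def, hc₂def]; linarith
    have hc₁1 : 1 < c₁ := by rw [hc₁def]; linarith
    have hc₂2 : c₂ < 2 := by rw [hc₂def]; linarith
    have hc₁0 : (0:ℝ) < c₁ := by linarith
    have hc₂0 : (0:ℝ) < c₂ := by linarith
    have hsub : Set.Icc c₁ c₂ ⊆ Set.Ioo (x₀ - ε) (x₀ + ε) := by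
      intro z hz
      obtain ⟨hz1, hz2⟩ := hz
      constructor
      · rw [hc₁def] at hz1; linarith
      · rw [hc₂def] at hz2; linarith
    have hd : 0 < 1/c₁ - 1/c₂ := by
      have h := one_div_lt_one_div_of_lt hc₁0 hc₁c₂
      linarith
    have hC : 0 < |(q:ℝ)| * (1/c₁ - 1/c₂) := mul_pos (abs_pos.2 hq0) hd
    obtain ⟨K₂, hK₂⟩ := exists_nat_ge (Real.log (1/(|(q:ℝ)| * (1/c₁ - 1/c₂))) / Δ)
    obtain ⟨k, hkK', hksel⟩ := exists_hit hg hΔ0 hirr (c1:ℝ) (r1:ℝ) hr0 (max K K₂)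
    have hkK : K ≤ k := le_trans (le_max_left _ _) hkK'
    set E := Real.exp ((k:ℝ)*Δ) with hEdef
    have hE0 : 0 < E := Real.exp_pos _
    have hkE : 1 ≤ E * (|(q:ℝ)| * (1/c₁ - 1/c₂)) := by
      have h1 : (K₂:ℝ) ≤ (k:ℝ) := by exact_mod_cast le_trans (le_max_right _ _) hkK'
      have h2 : Real.log (1/(|(q:ℝ)| * (1/c₁ - 1/c₂))) ≤ (k:ℝ)*Δ := by
        rw [div_le_iff₀ hΔ0] at hK₂
        have h3 : (K₂:ℝ)*Δ ≤ (k:ℝ)*Δ := mul_le_mul_of_nonneg_right h1 hΔ0.le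
        linarith
      have h3 : 1/(|(q:ℝ)| * (1/c₁ - 1/c₂)) ≤ E := by
        calc 1/(|(q:ℝ)| * (1/c₁ - 1/c₂))
            = Real.exp (Real.log (1/(|(q:ℝ)| * (1/c₁ - 1/c₂)))) :=
              (Real.exp_log (by positivity)).symm
          _ ≤ E := Real.exp_le_exp.2 h2
      exact (div_le_iff₀ hC).1 h3
    set f : ℝ → ℝ := fun s => (q:ℝ) * E / s with hfdef
    have hcont : ContinuousOn f (Set.Icc c₁ c₂) := by
      apply ContinuousOn.div continuousOn_const continuousOn_id
      intro z hz
      have : (0:ℝ) < z := lt_of_lt_of_le hc₁0 hz.1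
      exact ne_of_gt this
    set t₀ := (lov bit + hiv bit)/2 with ht₀def
    have ht₀lo : lov bit < t₀ := by
      have := hlohi bit; rw [ht₀def]; linarith
    have ht₀hi : t₀ < hiv bit := by
      have := hlohi bit; rw [ht₀def]; linarith
    have ht₀0 : 0 ≤ t₀ := le_of_lt (lt_trans (hlo0 bit) ht₀lo)
    have ht₀1 : t₀ < 1 := lt_of_lt_of_le ht₀hi (hhi1 bit)
    have he : f c₁ - f c₂ = (q:ℝ) * E * (1/c₁ - 1/c₂) := by
      rw [hfdef]
      field_simp
    have habs : 1 ≤ |f c₁ - f c₂| := by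
      have e2 : |(q:ℝ) * E * (1/c₁ - 1/c₂)| = |(q:ℝ)| * E * (1/c₁ - 1/c₂) := by
        rw [abs_mul, abs_mul, abs_of_pos hE0, abs_of_pos hd]
      rw [he, e2]
      calc (1:ℝ) ≤ E * (|(q:ℝ)| * (1/c₁ - 1/c₂)) := hkE
        _ = |(q:ℝ)| * E * (1/c₁ - 1/c₂) := by ring
    have himg : Set.Icc (min (f c₁) (f c₂)) (max (f c₁) (f c₂)) ⊆ f '' Set.Icc c₁ c₂ := by
      rcases le_total (f c₁) (f c₂) with h | h
      · rw [min_eq_left h, max_eq_right h]; exact intermediate_value_Icc hc₁c₂.le hcont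
      · rw [min_eq_right h, max_eq_left h]; exact intermediate_value_Icc' hc₁c₂.le hcont
    have hspread : min (f c₁) (f c₂) + 1 ≤ max (f c₁) (f c₂) := by
      rcases le_total (f c₁) (f c₂) with h | h
      · rw [min_eq_left h, max_eq_right h]
        rw [abs_of_nonpos (by linarith : f c₁ - f c₂ ≤ 0)] at habs
        linarith
      · rw [min_eq_right h, max_eq_left h]
        rw [abs_of_nonneg (by linarith : 0 ≤ f c₁ - f c₂)] at habs
        linarith
    set m := ⌈min (f c₁) (f c₂) - t₀⌉ with hmdef
    have hv1 : min (f c₁) (f c₂) ≤ (m:ℝ) + t₀ := by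
      have := Int.le_ceil (min (f c₁) (f c₂) - t₀)
      rw [hmdef]; linarith
    have hv2 : (m:ℝ) + t₀ ≤ max (f c₁) (f c₂) := by
      have := Int.ceil_lt_add_one (min (f c₁) (f c₂) - t₀)
      rw [hmdef]; linarith
    obtain ⟨s₁, hs₁mem, hfs₁⟩ := himg ⟨hv1, hv2⟩
    refine ⟨s₁, hball (hsub hs₁mem), Or.inr (Set.mem_iUnion.2 ⟨k, ?_⟩)⟩
    rw [if_pos ⟨hkK, hksel⟩]
    refine ⟨⟨lt_of_lt_of_le hc₁1 hs₁mem.1, lt_of_le_of_lt hs₁mem.2 hc₂2⟩, ?_⟩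
    have hval : (q:ℝ) * Real.exp ((k:ℝ)*Δ) / s₁ = (m:ℝ) + t₀ := hfs₁
    refine Set.mem_iUnion.2 ⟨m, ?_⟩
    show (q:ℝ) * Real.exp ((k:ℝ)*Δ) / s₁ ∈ Set.Ioo ((m:ℝ) + lov bit) ((m:ℝ) + hiv bit)
    rw [hval]
    exact ⟨by linarith [ht₀lo], by linarith [ht₀hi]⟩
  -- Baire
  have hbaire : Dense (⋂ i, U i) := dense_iInter_of_isOpen hopen hdense
  obtain ⟨s₀, hs₀mem, hs₀Ioo⟩ := hbaire.exists_mem_open isOpen_Ioo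
    (Set.nonempty_Ioo.2 (by norm_num : (1:ℝ) < 2))
  have hs₀1 : (1:ℝ) < s₀ := hs₀Ioo.1
  have hs₀2 : s₀ < 2 := hs₀Ioo.2
  have hs₀0 : 0 < s₀ := by linarith
  refine ⟨Δ, s₀, hΔ0, hs₀0, ?_⟩
  apply wset_partialVitali hα0 hα12 hβ0 hβ1 hs₀0
  · rw [← hgdef, ← hτdef]; exact hΔlo
  · rw [← hgdef, ← hτdef]; exact hΔhi
  · rw [← hτdef]
    have : (α/(1-α))*Real.exp Δ + (α/(1-α))*Real.exp (τ/2) < 1 - 2*α := hRsum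
    linarith [this, hα0]
  · -- the U property
    intro q c1 r1 K Ma Mb hMab hq0 hr0
    have hbit : ∃ bit : Bool, Ma = (if bit then Rs else Rb) ∧ Mb = (if bit then Rb else Rs) := by
      rcases hMab with ⟨h1, h2⟩ | ⟨h1, h2⟩
      · exact ⟨false, by simp [h1, h2, hRbdef, hRsdef, hτdef]⟩
      · exact ⟨true, by simp [h1, h2, hRbdef, hRsdef, hτdef]⟩
    obtain ⟨bit, hMa, hMb⟩ := hbit
    have hmem := Set.mem_iInter.1 hs₀mem (q, c1, r1, K, bit)
    simp only [hUdef] at hmem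
    rw [if_neg (by push_neg; exact ⟨hq0, by linarith⟩)] at hmem
    rcases hmem with (h | h) | h
    · exact absurd h (by simp; linarith)
    · exact absurd h (by simp; linarith)
    obtain ⟨k, hk⟩ := Set.mem_iUnion.1 h
    by_cases hcond : K ≤ k ∧ rmod g ((k:ℝ)*Δ - (c1:ℝ)) < (r1:ℝ)
    · rw [if_pos hcond] at hk
      obtain ⟨hkIoo, hkpre⟩ := hk
      rw [Set.mem_preimage] at hkpre
      have hfr := (fract_mem_Ioo_iff (le_of_lt (hlo0 bit)) (hhi1 bit) _).1 hkpre
      refine ⟨k, hcond.1, by rw [← hgdef]; exact hcond.2, ?_, ?_⟩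
      · have := hfr.1
        rw [hlovdef] at this
        simp only at this
        rw [hMa]
        exact this
      · have := hfr.2
        rw [hhivdef] at this
        simp only at this
        rw [hMb]
        exact this
    · rw [if_neg hcond] at hk
      exact absurd hk (Set.notMem_empty _)


/-- main theorem: if `0 < α < 1/12` and
`α/(1 - 5α)² < β < 1` then there is an `(α,β)`-winning Vitali set. -/
theorem stmt13 (α β : ℝ) (hα0 : 0 < α) (hα12 : α < 1/12)
    (hβlow : α / (1 - 5 * α) ^ 2 < β) (hβ1 : β < 1) :
    ∃ V : Set ℝ, IsVitali V ∧ Winning α β V := by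
  have hβ0 : 0 < β := lt_of_le_of_lt (div_nonneg hα0.le (by positivity)) hβlow
  obtain ⟨Δ, s₀, hΔ0, hs₀0, hPV⟩ := exists_good_params hα0 hα12 hβlow hβ1
  obtain ⟨V, hsub, hVit⟩ := VExt.extend_partialVitali hPV
  refine ⟨V, hVit, sigma α Δ s₀, ?_, ?_⟩
  · exact sigma_legal hα0 (by linarith) hβ0 hs₀0 hΔ0
  · intro B hB x hx
    exact hsub (outcome_mem_WSet B hB x hx)

end Schmidt
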